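/- Let n ≥ 1 and a : {1,…,n} → ℕ with M := Σ_{i=1}^n a_i > 0. Consider the min-max-min problem with feasible set X = {0,1}^n, nominal costs ĉ_i = −a_i, deviations d_i = M for all i, budget Γ = 1 and K = 2 solutions. Then min over (x^1,x^2) ∈ X² of max over c ∈ U^1(ĉ,d) of min(c^⊤x^1, c^⊤x^2) equals −M/2 if and only if there exists a subset S ⊆ {1,…,n} with Σ_{i∈S} a_i = Σ_{i∉S} a_i. -/
import Mathlib


open Finset

/-- The discrete budgeted uncertainty set
`U^Γ(ĉ,d) = { c : c i = ĉ i + δ i * d i, δ ∈ {0,1}^n, ∑ i, δ i ≤ Γ }`,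
with the 0-1 vector `δ` identified with the set `D` of its nonzero coordinates. -/
noncomputable def budgetU (n : ℕ) (chat d : Fin n → ℝ) (Γ : ℕ) : Finset (Fin n → ℝ) :=
  (((Finset.univ : Finset (Fin n)).powerset.filter fun D => D.card ≤ Γ).image
    fun D i => chat i + (if i ∈ D then d i else 0))

lemma budgetU_nonempty (n : ℕ) (chat d : Fin n → ℝ) (Γ : ℕ) :
    (budgetU n chat d Γ).Nonempty :=
  ⟨_, Finset.mem_image.mpr ⟨∅, by simp, rfl⟩⟩

set_option maxHeartbeats 1000000 in
/-- correctness of the reduction from the partition problem to the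
min-max-min unconstrained binary problem with `ĉ = -a`, `d = M`, `Γ = 1`, `K = 2`. -/
theorem partition_reduction (n : ℕ) (hn : 1 ≤ n) (a : Fin n → ℕ)
    (M : ℕ) (hM : M = ∑ i, a i) (hMpos : 0 < M) :
    ((Finset.univ : Finset (Finset (Fin n) × Finset (Fin n))).inf' univ_nonempty
        fun p => (budgetU n (fun i => -(a i : ℝ)) (fun _ => (M : ℝ)) 1).sup'
          (budgetU_nonempty _ _ _ _)
          fun c => min (∑ i ∈ p.1, c i) (∑ i ∈ p.2, c i)) = -(M : ℝ) / 2 ↔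
    ∃ S : Finset (Fin n), ∑ i ∈ S, a i = ∑ i ∈ Sᶜ, a i := by
  have hMR : (0:ℝ) < (M:ℝ) := by exact_mod_cast hMpos
  have hMsum : (M:ℝ) = ∑ i, (a i : ℝ) := by rw [hM]; push_cast; rfl
  have hAnn : ∀ S : Finset (Fin n), (0:ℝ) ≤ ∑ i ∈ S, (a i : ℝ) :=
    fun S => Finset.sum_nonneg fun i _ => by positivity
  have hAM : ∀ S : Finset (Fin n), ∑ i ∈ S, (a i : ℝ) ≤ (M:ℝ) := by
    intro S
    rw [hMsum]
    exact Finset.sum_le_sum_of_subset_of_nonneg (Finset.subset_univ S)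
      (fun i _ _ => by positivity)
  have hcompl : ∀ S : Finset (Fin n),
      ∑ i ∈ S, (a i : ℝ) + ∑ i ∈ Sᶜ, (a i : ℝ) = (M:ℝ) := by
    intro S; rw [hMsum]; exact Finset.sum_add_sum_compl S _
  set cv : Finset (Fin n) → (Fin n → ℝ) :=
    fun D i => -(a i : ℝ) + (if i ∈ D then (M:ℝ) else 0) with hcv
  have hmem : ∀ D : Finset (Fin n), D.card ≤ 1 →
      cv D ∈ budgetU n (fun i => -(a i : ℝ)) (fun _ => (M : ℝ)) 1 :=
    fun D hD => Finset.mem_image.mpr ⟨D, by simpa using hD, rfl⟩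
  have hmem' : ∀ c ∈ budgetU n (fun i => -(a i : ℝ)) (fun _ => (M : ℝ)) 1,
      ∃ D : Finset (Fin n), D.card ≤ 1 ∧ c = cv D := by
    intro c hc
    obtain ⟨D, hD, rfl⟩ := Finset.mem_image.mp hc
    exact ⟨D, by simpa using (Finset.mem_filter.mp hD).2, rfl⟩
  have hsum : ∀ S D : Finset (Fin n),
      ∑ i ∈ S, cv D i = -(∑ i ∈ S, (a i : ℝ)) + ((S ∩ D).card : ℝ) * M := by
    intro S D
    have h1 : (∑ i ∈ S, if i ∈ D then (M:ℝ) else 0) = ((S ∩ D).card : ℝ) * M := by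
      rw [← Finset.sum_filter, Finset.filter_mem_eq_inter, Finset.sum_const, nsmul_eq_mul]
    simp only [hcv, Finset.sum_add_distrib, h1, Finset.sum_neg_distrib]
  -- lower bound witnesses
  have lbw : ∀ S1 S2 : Finset (Fin n),
      ∃ c ∈ budgetU n (fun i => -(a i : ℝ)) (fun _ => (M : ℝ)) 1,
        -(M:ℝ)/2 ≤ ∑ i ∈ S1, c i ∧ -(M:ℝ)/2 ≤ ∑ i ∈ S2, c i := by
    intro S1 S2
    by_cases h1 : ∑ i ∈ S1, (a i : ℝ) ≤ (M:ℝ)/2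
    · by_cases h2 : ∑ i ∈ S2, (a i : ℝ) ≤ (M:ℝ)/2
      · refine ⟨cv ∅, hmem ∅ (by simp), ?_, ?_⟩ <;>
        · rw [hsum]; simp; linarith
      · push_neg at h2
        have hns : ¬ S2 ⊆ S1 := fun hss =>
          absurd (le_trans (Finset.sum_le_sum_of_subset_of_nonneg hss
            (fun i _ _ => by positivity)) h1) (not_le.mpr h2)
        obtain ⟨j, hj2, hj1⟩ := Finset.not_subset.mp hns
        refine ⟨cv {j}, hmem {j} (by simp), ?_, ?_⟩
        · rw [hsum]
          rw [Finset.inter_singleton_of_notMem hj1]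
          simp; linarith
        · rw [hsum]
          rw [Finset.inter_singleton_of_mem hj2]
          simp
          have := hAM S2; linarith
    · push_neg at h1
      by_cases h2 : ∑ i ∈ S2, (a i : ℝ) ≤ (M:ℝ)/2
      · have hns : ¬ S1 ⊆ S2 := fun hss =>
          absurd (le_trans (Finset.sum_le_sum_of_subset_of_nonneg hss
            (fun i _ _ => by positivity)) h2) (not_le.mpr h1)
        obtain ⟨j, hj1, hj2⟩ := Finset.not_subset.mp hns
        refine ⟨cv {j}, hmem {j} (by simp), ?_, ?_⟩
        · rw [hsum]
          rw [Finset.inter_singleton_of_mem hj1]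
          simp
          have := hAM S1; linarith
        · rw [hsum]
          rw [Finset.inter_singleton_of_notMem hj2]
          simp; linarith
      · push_neg at h2
        have hsum4 : ∑ i ∈ S1 ∪ S2, (a i:ℝ) + ∑ i ∈ S1 ∩ S2, (a i:ℝ)
            = ∑ i ∈ S1, (a i:ℝ) + ∑ i ∈ S2, (a i:ℝ) :=
          Finset.sum_union_inter
        have hpos : (0:ℝ) < ∑ i ∈ S1 ∩ S2, (a i:ℝ) := by
          have := hAM (S1 ∪ S2); linarith
        have hne : (S1 ∩ S2).Nonempty := by
          rcases (S1 ∩ S2).eq_empty_or_nonempty with h | h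
          · rw [h] at hpos; simp at hpos
          · exact h
        obtain ⟨j, hj⟩ := hne
        refine ⟨cv {j}, hmem {j} (by simp), ?_, ?_⟩
        · rw [hsum, Finset.inter_singleton_of_mem (Finset.mem_inter.mp hj).1]
          simp
          have := hAM S1; linarith
        · rw [hsum, Finset.inter_singleton_of_mem (Finset.mem_inter.mp hj).2]
          simp
          have := hAM S2; linarith
  -- a set with real sum M/2 gives a partition
  have mk : ∀ S : Finset (Fin n), ∑ i ∈ S, (a i : ℝ) = (M:ℝ)/2 →
      ∃ S' : Finset (Fin n), ∑ i ∈ S', a i = ∑ i ∈ S'ᶜ, a i := by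
    intro S hS
    refine ⟨S, ?_⟩
    have h2 : ∑ i ∈ Sᶜ, (a i : ℝ) = (M:ℝ)/2 := by have := hcompl S; linarith
    exact_mod_cast hS.trans h2.symm
  constructor
  · intro h
    obtain ⟨p, -, hp⟩ := Finset.exists_mem_eq_inf'
      (univ_nonempty : (Finset.univ : Finset (Finset (Fin n) × Finset (Fin n))).Nonempty)
      (fun p => (budgetU n (fun i => -(a i : ℝ)) (fun _ => (M : ℝ)) 1).sup'
          (budgetU_nonempty _ _ _ _)
          fun c => min (∑ i ∈ p.1, c i) (∑ i ∈ p.2, c i))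
    have hFp : ((budgetU n (fun i => -(a i : ℝ)) (fun _ => (M : ℝ)) 1).sup'
          (budgetU_nonempty _ _ _ _)
          fun c => min (∑ i ∈ p.1, c i) (∑ i ∈ p.2, c i)) = -(M:ℝ)/2 :=
      hp.symm.trans h
    have hub : ∀ D : Finset (Fin n), D.card ≤ 1 →
        min (∑ i ∈ p.1, cv D i) (∑ i ∈ p.2, cv D i) ≤ -(M:ℝ)/2 := by
      intro D hD
      calc min (∑ i ∈ p.1, cv D i) (∑ i ∈ p.2, cv D i)
          ≤ _ := Finset.le_sup' (fun c => min (∑ i ∈ p.1, c i) (∑ i ∈ p.2, c i)) (hmem D hD)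
        _ = -(M:ℝ)/2 := hFp
    by_cases h1 : ∑ i ∈ p.1, (a i : ℝ) ≤ (M:ℝ)/2
    · by_cases h2 : ∑ i ∈ p.2, (a i : ℝ) ≤ (M:ℝ)/2
      · have := hub ∅ (by simp)
        rw [hsum, hsum] at this
        simp at this
        rcases this with hh | hh
        · exact mk p.1 (by linarith)
        · exact mk p.2 (by linarith)
      · push_neg at h2
        have hns : ¬ p.2 ⊆ p.1 := fun hss =>
          absurd (le_trans (Finset.sum_le_sum_of_subset_of_nonneg hss
            (fun i _ _ => by positivity)) h1) (not_le.mpr h2)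
        obtain ⟨j, hj2, hj1⟩ := Finset.not_subset.mp hns
        have := hub {j} (by simp)
        rw [hsum, hsum, Finset.inter_singleton_of_notMem hj1,
          Finset.inter_singleton_of_mem hj2] at this
        simp at this
        rcases this with hh | hh
        · exact mk p.1 (by linarith)
        · exfalso; have := hAM p.2; linarith
    · push_neg at h1
      by_cases h2 : ∑ i ∈ p.2, (a i : ℝ) ≤ (M:ℝ)/2
      · have hns : ¬ p.1 ⊆ p.2 := fun hss =>
          absurd (le_trans (Finset.sum_le_sum_of_subset_of_nonneg hss
            (fun i _ _ => by positivity)) h2) (not_le.mpr h1)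
        obtain ⟨j, hj1, hj2⟩ := Finset.not_subset.mp hns
        have := hub {j} (by simp)
        rw [hsum, hsum, Finset.inter_singleton_of_mem hj1,
          Finset.inter_singleton_of_notMem hj2] at this
        simp at this
        rcases this with hh | hh
        · exfalso; have := hAM p.1; linarith
        · exact mk p.2 (by linarith)
      · push_neg at h2
        have hsum4 : ∑ i ∈ p.1 ∪ p.2, (a i:ℝ) + ∑ i ∈ p.1 ∩ p.2, (a i:ℝ)
            = ∑ i ∈ p.1, (a i:ℝ) + ∑ i ∈ p.2, (a i:ℝ) :=
          Finset.sum_union_inter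
        have hpos : (0:ℝ) < ∑ i ∈ p.1 ∩ p.2, (a i:ℝ) := by
          have := hAM (p.1 ∪ p.2); linarith
        have hne : (p.1 ∩ p.2).Nonempty := by
          rcases (p.1 ∩ p.2).eq_empty_or_nonempty with hh | hh
          · rw [hh] at hpos; simp at hpos
          · exact hh
        obtain ⟨j, hj⟩ := hne
        have := hub {j} (by simp)
        rw [hsum, hsum, Finset.inter_singleton_of_mem (Finset.mem_inter.mp hj).1,
          Finset.inter_singleton_of_mem (Finset.mem_inter.mp hj).2] at this
        simp at this
        exfalso
        rcases this with hh | hh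
        · have := hAM p.1; linarith
        · have := hAM p.2; linarith
  · rintro ⟨S, hS⟩
    have hSr : ∑ i ∈ S, (a i : ℝ) = ∑ i ∈ Sᶜ, (a i : ℝ) := by exact_mod_cast hS
    have hS2 : ∑ i ∈ S, (a i : ℝ) = (M:ℝ)/2 := by have := hcompl S; linarith
    have hSc : ∑ i ∈ Sᶜ, (a i : ℝ) = (M:ℝ)/2 := by have := hcompl S; linarith
    apply le_antisymm
    · refine le_trans (Finset.inf'_le _ (Finset.mem_univ (S, Sᶜ))) ?_
      apply Finset.sup'_le
      intro c hc
      obtain ⟨D, hD, rfl⟩ := hmem' c hc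
      have hre : min (∑ i ∈ (S, Sᶜ).1, cv D i) (∑ i ∈ (S, Sᶜ).2, cv D i)
          = min (-(∑ i ∈ S, (a i:ℝ)) + ((S ∩ D).card : ℝ) * M)
                (-(∑ i ∈ Sᶜ, (a i:ℝ)) + ((Sᶜ ∩ D).card : ℝ) * M) := by
        rw [hsum, hsum]
      rw [hre, hS2, hSc]
      have hcards : (S ∩ D).card + (Sᶜ ∩ D).card ≤ 1 := by
        have hu : (S ∩ D) ∪ (Sᶜ ∩ D) = D := by
          rw [← Finset.union_inter_distrib_right, Finset.union_compl, Finset.univ_inter]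
        have hdisj : Disjoint (S ∩ D) (Sᶜ ∩ D) :=
          Finset.disjoint_left.mpr fun x hx hx' => by
            have h1 := (Finset.mem_inter.mp hx).1
            have h2 := (Finset.mem_inter.mp hx').1
            exact (Finset.mem_compl.mp h2) h1
        calc (S ∩ D).card + (Sᶜ ∩ D).card
            = ((S ∩ D) ∪ (Sᶜ ∩ D)).card := (Finset.card_union_of_disjoint hdisj).symm
          _ = D.card := by rw [hu]
          _ ≤ 1 := hD
      have : (S ∩ D).card = 0 ∨ (Sᶜ ∩ D).card = 0 := by omega
      rcases this with hz | hz <;> rw [hz]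
      · calc min (-((M:ℝ)/2) + ((0:ℕ):ℝ) * M) (-((M:ℝ)/2) + ((Sᶜ ∩ D).card : ℝ) * M)
            ≤ -((M:ℝ)/2) + ((0:ℕ):ℝ) * M := min_le_left _ _
          _ = -(M:ℝ)/2 := by push_cast; ring
      · calc min (-((M:ℝ)/2) + ((S ∩ D).card : ℝ) * M) (-((M:ℝ)/2) + ((0:ℕ):ℝ) * M)
            ≤ -((M:ℝ)/2) + ((0:ℕ):ℝ) * M := min_le_right _ _
          _ = -(M:ℝ)/2 := by push_cast; ring
    · apply Finset.le_inf'
      intro p _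
      obtain ⟨c, hc, hc1, hc2⟩ := lbw p.1 p.2
      exact le_trans (le_min hc1 hc2) (Finset.le_sup' (fun c => min (∑ i ∈ p.1, c i) (∑ i ∈ p.2, c i)) hc)
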